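/- Let θ₁, θ₂ ∈ ℝ, a, b > 0, and define C(x, y) = (θ₁ − θ₂)² x y / (2(a y + b x)) for x, y > 0. Then for all x, y > 0: the partial derivative of C with respect to x equals (θ₁ − ϑ̄)²/(2a) and the partial derivative of C with respect to y equals (θ₂ − ϑ̄)²/(2b), where ϑ̄ = (x θ₁/a + y θ₂/b) / (x/a + y/b). -/

import Mathlib

/-- For `C(x,y) = (θ₁ − θ₂)² x y / (2(a y + b x))` with `a, b > 0`, the
partial derivatives at any `x, y > 0` are `∂C/∂x = (θ₁ − ϑ̄)²/(2a)` and
`∂C/∂y = (θ₂ − ϑ̄)²/(2b)`, where `ϑ̄ = (xθ₁/a + yθ₂/b)/(x/a + y/b)`. -/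
theorem stmt4 (θ1 θ2 a b : ℝ) (ha : 0 < a) (hb : 0 < b)
    (x y : ℝ) (hx : 0 < x) (hy : 0 < y) :
    HasDerivAt (fun t => (θ1 - θ2) ^ 2 * t * y / (2 * (a * y + b * t)))
      ((θ1 - (x * θ1 / a + y * θ2 / b) / (x / a + y / b)) ^ 2 / (2 * a)) x ∧
    HasDerivAt (fun t => (θ1 - θ2) ^ 2 * x * t / (2 * (a * t + b * x)))
      ((θ2 - (x * θ1 / a + y * θ2 / b) / (x / a + y / b)) ^ 2 / (2 * b)) y := by
  have hd1 : (2 : ℝ) * (a * y + b * x) ≠ 0 := by positivity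
  have hs : x / a + y / b ≠ 0 := by positivity
  constructor
  · have hnum : HasDerivAt (fun t : ℝ => (θ1 - θ2) ^ 2 * t * y) ((θ1 - θ2) ^ 2 * y) x := by
      have := (hasDerivAt_id x).const_mul ((θ1 - θ2) ^ 2)
      simpa [mul_comm, mul_assoc, mul_left_comm] using this.mul_const y
    have hden : HasDerivAt (fun t : ℝ => 2 * (a * y + b * t)) (2 * b) x := by
      have := ((hasDerivAt_id x).const_mul b).const_add (a * y)
      simpa [mul_comm] using this.const_mul 2
    have h := hnum.div hden hd1
    refine h.congr_deriv ?_
    field_simp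
    ring
  · have hnum : HasDerivAt (fun t : ℝ => (θ1 - θ2) ^ 2 * x * t) ((θ1 - θ2) ^ 2 * x) y := by
      simpa using (hasDerivAt_id y).const_mul ((θ1 - θ2) ^ 2 * x)
    have hden : HasDerivAt (fun t : ℝ => 2 * (a * t + b * x)) (2 * a) y := by
      have := ((hasDerivAt_id y).const_mul a).add_const (b * x)
      simpa [mul_comm] using this.const_mul 2
    have h := hnum.div hden hd1
    refine h.congr_deriv ?_
    field_simp
    ring
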